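/- Let χ, ϑ, ν, d, τ > 0 and let Ω ⊂ ℝⁿ be a bounded open set. If (u, v) is a nonnegative classical solution of the Nicholson steady-state system dΔu(x) − χu(x) + ϑ v(x) e^{−ν v(x)} = 0 and dΔv(x) + (1/τ)(u(x) − v(x)) = 0 for x ∈ Ω, with u = v = 0 on ∂Ω, then 0 ≤ u(x) ≤ ϑ/(νχe) and 0 ≤ v(x) ≤ ϑ/(νχe) for all x ∈ Ω, where e is Euler's number. -/

import Mathlib

open Set Real

section Helpers

lemma second_deriv_test {g : ℝ → ℝ} {s : Set ℝ} (hs : IsOpen s) (h0 : (0:ℝ) ∈ s)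
    (hg : ContDiffOn ℝ 2 g s) (hmax : IsLocalMax g 0) : deriv (deriv g) 0 ≤ 0 := by
  by_contra hc
  push_neg at hc
  have hg' : ContDiffOn ℝ 1 (deriv g) s := hg.deriv_of_isOpen hs (by norm_num)
  have hg'' : ContinuousOn (deriv (deriv g)) s := by
    have : ContDiffOn ℝ 0 (deriv (deriv g)) s := hg'.deriv_of_isOpen hs (by norm_num)
    exact this.continuousOn
  have hcontAt : ContinuousAt (deriv (deriv g)) 0 :=
    hg''.continuousAt (hs.mem_nhds h0)
  have hev : ∀ᶠ t in nhds (0:ℝ), 0 < deriv (deriv g) t ∧ t ∈ s := by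
    filter_upwards [hcontAt.preimage_mem_nhds (Ioi_mem_nhds hc), hs.mem_nhds h0] with t h1 h2
    exact ⟨h1, h2⟩
  obtain ⟨ε2, hε2, hloc⟩ := Metric.eventually_nhds_iff.mp hmax
  obtain ⟨ε, hε, hball⟩ := Metric.eventually_nhds_iff.mp hev
  have hsub : Ioo (-ε) ε ⊆ s := by
    intro y hy
    have : dist y 0 < ε := by
      rw [Real.dist_eq, sub_zero, abs_lt]; exact ⟨hy.1, hy.2⟩
    exact (hball this).2
  have hpos : ∀ y ∈ Ioo (-ε) ε, 0 < deriv (deriv g) y := by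
    intro y hy
    have : dist y 0 < ε := by
      rw [Real.dist_eq, sub_zero, abs_lt]; exact ⟨hy.1, hy.2⟩
    exact (hball this).1
  have hmono : StrictMonoOn (deriv g) (Ioo (-ε) ε) := by
    apply strictMonoOn_of_deriv_pos (convex_Ioo _ _) (hg'.continuousOn.mono hsub)
    intro y hy
    rw [interior_Ioo] at hy
    exact hpos y hy
  have hd0 : deriv g 0 = 0 := hmax.deriv_eq_zero
  have hgpos : ∀ t ∈ Ioo (0:ℝ) ε, 0 < deriv g t := by
    intro t ht
    have := hmono (show (0:ℝ) ∈ Ioo (-ε) ε by constructor <;> [linarith; linarith])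
      (show t ∈ Ioo (-ε) ε by constructor <;> [linarith [ht.1]; exact ht.2]) ht.1
    rwa [hd0] at this
  have hmono2 : StrictMonoOn g (Ico (0:ℝ) ε) := by
    apply strictMonoOn_of_deriv_pos (convex_Ico _ _)
    · apply hg.continuousOn.mono
      intro y hy
      exact hsub ⟨by linarith [hy.1], hy.2⟩
    · intro y hy
      rw [interior_Ico] at hy
      exact hgpos y hy
  set δ := min ε ε2 / 2 with hδ
  have hδpos : 0 < δ := by positivity
  have hδε : δ < ε := by
    have h1 : min ε ε2 ≤ ε := min_le_left _ _
    simp only [hδ]; linarith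
  have hδε2 : δ < ε2 := by
    have h1 : min ε ε2 ≤ ε2 := min_le_right _ _
    simp only [hδ]; linarith
  have h1 : g 0 < g δ := hmono2 ⟨le_refl _, hε⟩ ⟨le_of_lt hδpos, hδε⟩ hδpos
  have h2 : g δ ≤ g 0 := hloc (by rw [Real.dist_eq, sub_zero, abs_of_pos hδpos]; exact hδε2)
  linarith

variable {E : Type*} [NormedAddCommGroup E] [NormedSpace ℝ E]

lemma second_dderiv_nonpos {f : E → ℝ} {s : Set E} {x : E} (hs : IsOpen s) (hx : x ∈ s)
    (hf : ContDiffOn ℝ 2 f s) (hmax : IsLocalMax f x) (w : E) :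
    fderiv ℝ (fderiv ℝ f) x w w ≤ 0 := by
  set L : ℝ → E := fun t => x + t • w with hLdef
  have hL : ContDiff ℝ 2 L := contDiff_const.add (contDiff_id.smul contDiff_const)
  have hL0 : L 0 = x := by simp [hLdef]
  set s' : Set ℝ := L ⁻¹' s with hs'def
  have hs'o : IsOpen s' := hL.continuous.isOpen_preimage s hs
  have h0s' : (0:ℝ) ∈ s' := by simp [hs'def, hL0, hx]
  set g : ℝ → ℝ := f ∘ L with hgdef
  have hg : ContDiffOn ℝ 2 g s' := hf.comp (hL.contDiffOn) (mapsTo_preimage _ _)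
  have hgmax : IsLocalMax g 0 := by
    have hcont : ContinuousAt L 0 := hL.continuous.continuousAt
    exact hcont.tendsto.eventually (hL0 ▸ hmax)
  have hLd : ∀ t : ℝ, HasDerivAt L w t := by
    intro t
    have h1 : HasDerivAt (fun t : ℝ => t • w) ((1:ℝ) • w) t := (hasDerivAt_id t).smul_const w
    have h2 := (hasDerivAt_const t x).add h1
    simp only [one_smul, zero_add] at h2
    exact h2
  have hfd : DifferentiableOn ℝ f s := hf.differentiableOn (by norm_num)
  have hderivg : ∀ t ∈ s', HasDerivAt g (fderiv ℝ f (L t) w) t := by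
    intro t ht
    have hfa : DifferentiableAt ℝ f (L t) :=
      (hfd.differentiableAt (hs.mem_nhds (mem_preimage.mp ht)))
    exact hfa.hasFDerivAt.comp_hasDerivAt t (hLd t)
  have hevEq : (deriv g) =ᶠ[nhds 0] (fun t => fderiv ℝ f (L t) w) := by
    filter_upwards [hs'o.mem_nhds h0s'] with t ht
    exact (hderivg t ht).deriv
  have hφ : ContDiffOn ℝ 1 (fderiv ℝ f) s := hf.fderiv_of_isOpen hs (by norm_num)
  have hφd : DifferentiableAt ℝ (fderiv ℝ f) x :=
    ((hφ.differentiableOn (by norm_num)) x hx).differentiableAt (hs.mem_nhds hx)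
  have h1 : HasDerivAt (fun t => fderiv ℝ f (L t)) (fderiv ℝ (fderiv ℝ f) x w) 0 := by
    have hφd' : HasFDerivAt (fderiv ℝ f) (fderiv ℝ (fderiv ℝ f) x) (L 0) := hL0 ▸ hφd.hasFDerivAt
    exact hφd'.comp_hasDerivAt 0 (hLd 0)
  have h2 : HasDerivAt (fun t => fderiv ℝ f (L t) w) (fderiv ℝ (fderiv ℝ f) x w w) 0 := by
    have hA : HasFDerivAt (ContinuousLinearMap.apply ℝ ℝ w)
        (ContinuousLinearMap.apply ℝ ℝ w) (fderiv ℝ f (L 0)) :=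
      (ContinuousLinearMap.apply ℝ ℝ w).hasFDerivAt
    exact hA.comp_hasDerivAt 0 h1
  have hdd : deriv (deriv g) 0 = fderiv ℝ (fderiv ℝ f) x w w := by
    rw [hevEq.deriv_eq]
    exact h2.deriv
  rw [← hdd]
  exact second_deriv_test hs'o h0s' hg hgmax

end Helpers

/-- The Laplacian of `f` at `x`: the trace of the second derivative. -/
noncomputable def Lap {n : ℕ} (f : EuclideanSpace ℝ (Fin n) → ℝ)
    (x : EuclideanSpace ℝ (Fin n)) : ℝ :=
  ∑ i : Fin n, iteratedFDeriv ℝ 2 f x ![EuclideanSpace.single i (1 : ℝ), EuclideanSpace.single i 1]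

lemma lap_nonpos {n : ℕ} {f : EuclideanSpace ℝ (Fin n) → ℝ} {Ω : Set (EuclideanSpace ℝ (Fin n))}
    (hΩo : IsOpen Ω) (hf : ContDiffOn ℝ 2 f Ω) {z : EuclideanSpace ℝ (Fin n)} (hz : z ∈ Ω)
    (hmax : IsLocalMax f z) : Lap f z ≤ 0 := by
  unfold Lap
  apply Finset.sum_nonpos
  intro i _
  rw [iteratedFDeriv_two_apply]
  simp only [Matrix.cons_val_zero, Matrix.cons_val_one, Matrix.head_cons]
  exact second_dderiv_nonpos hΩo hz hf hmax _

/-- `t ↦ t e^{-νt}` is bounded by `1/(νe)` for `t ≥ 0`. -/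
lemma key_exp_ineq {ν t : ℝ} (hν : 0 < ν) (ht : 0 ≤ t) :
    t * Real.exp (-ν * t) * (ν * Real.exp 1) ≤ 1 := by
  have e1 : ν * t ≤ Real.exp (ν * t - 1) := by
    have := Real.add_one_le_exp (ν * t - 1)
    linarith
  have e2 : Real.exp (ν * t - 1) * (Real.exp 1 * Real.exp (-ν * t)) = 1 := by
    rw [← Real.exp_add, ← Real.exp_add]
    norm_num
    ring
  have hp : 0 < Real.exp 1 * Real.exp (-ν * t) := by positivity
  calc t * Real.exp (-ν * t) * (ν * Real.exp 1)
      = (ν * t) * (Real.exp 1 * Real.exp (-ν * t)) := by ring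
    _ ≤ Real.exp (ν * t - 1) * (Real.exp 1 * Real.exp (-ν * t)) := by
        exact mul_le_mul_of_nonneg_right e1 (le_of_lt hp)
    _ = 1 := e2

/-- a priori bounds for nonnegative classical solutions of the Nicholson
steady state system dΔu − χu + ϑv e^{−νv} = 0, dΔv + (1/τ)(u − v) = 0 with zero
Dirichlet boundary values: 0 ≤ u, v ≤ ϑ/(νχe). -/
theorem stmt16 {n : ℕ} (Ω : Set (EuclideanSpace ℝ (Fin n)))
    (hΩo : IsOpen Ω) (hΩb : Bornology.IsBounded Ω)
    (χ ϑ ν d τ : ℝ) (hχ : 0 < χ) (hϑ : 0 < ϑ) (hν : 0 < ν) (hd : 0 < d) (hτ : 0 < τ)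
    -- (u, v) nonnegative classical solution
    (u v : EuclideanSpace ℝ (Fin n) → ℝ)
    (huc : ContinuousOn u (closure Ω)) (hvc : ContinuousOn v (closure Ω))
    (hu2 : ContDiffOn ℝ 2 u Ω) (hv2 : ContDiffOn ℝ 2 v Ω)
    (hub : ∀ x ∈ frontier Ω, u x = 0) (hvb : ∀ x ∈ frontier Ω, v x = 0)
    (hun : ∀ x ∈ Ω, 0 ≤ u x) (hvn : ∀ x ∈ Ω, 0 ≤ v x)
    (heq1 : ∀ x ∈ Ω, d * Lap u x - χ * u x + ϑ * v x * Real.exp (-ν * v x) = 0)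
    (heq2 : ∀ x ∈ Ω, d * Lap v x + (1 / τ) * (u x - v x) = 0) :
    ∀ x ∈ Ω, 0 ≤ u x ∧ u x ≤ ϑ / (ν * χ * Real.exp 1) ∧
      0 ≤ v x ∧ v x ≤ ϑ / (ν * χ * Real.exp 1) := by
  have hBpos : 0 < ϑ / (ν * χ * Real.exp 1) := by positivity
  have hK : IsCompact (closure Ω) :=
    Metric.isCompact_of_isClosed_isBounded isClosed_closure hΩb.closure
  have hcase : ∀ y ∈ closure Ω, y ∈ Ω ∨ y ∈ frontier Ω := by
    intro y hy
    by_cases h : y ∈ Ω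
    · exact Or.inl h
    · exact Or.inr ⟨hy, by rwa [hΩo.interior_eq]⟩
  have hlocmax : ∀ {f : EuclideanSpace ℝ (Fin n) → ℝ} {z : EuclideanSpace ℝ (Fin n)},
      z ∈ Ω → IsMaxOn f (closure Ω) z → IsLocalMax f z := by
    intro f z hz hmax
    exact Filter.eventually_of_mem (hΩo.mem_nhds hz) fun y hy => hmax (subset_closure hy)
  intro x hx
  have hne : (closure Ω).Nonempty := ⟨x, subset_closure hx⟩
  -- bound for u
  obtain ⟨z, hzK, hzmax⟩ := hK.exists_isMaxOn hne huc
  have hu_bound : ∀ y ∈ closure Ω, u y ≤ ϑ / (ν * χ * Real.exp 1) := by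
    intro y hy
    have huy : u y ≤ u z := hzmax hy
    rcases hcase z hzK with hzΩ | hzF
    · -- interior maximum
      have hlap : Lap u z ≤ 0 := lap_nonpos hΩo hu2 hzΩ (hlocmax hzΩ hzmax)
      have heq := heq1 z hzΩ
      have hvz : 0 ≤ v z := hvn z hzΩ
      have hkey : v z * Real.exp (-ν * v z) * (ν * Real.exp 1) ≤ 1 := key_exp_ineq hν hvz
      have hχu : χ * u z * (ν * Real.exp 1) ≤ ϑ := by
        have h1 : χ * u z ≤ ϑ * (v z * Real.exp (-ν * v z)) := by nlinarith
        have h2 : ϑ * (v z * Real.exp (-ν * v z)) * (ν * Real.exp 1) ≤ ϑ := by nlinarith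
        have hpos : 0 < ν * Real.exp 1 := by positivity
        nlinarith
      rw [le_div_iff₀ (by positivity)]
      nlinarith [mul_le_mul_of_nonneg_right huy (by positivity : (0:ℝ) ≤ ν * χ * Real.exp 1), hχu]
    · -- maximum on the boundary
      have : u z = 0 := hub z hzF
      have : u y ≤ 0 := by rw [← this]; exact huy
      linarith
  -- bound for v
  obtain ⟨z', hz'K, hz'max⟩ := hK.exists_isMaxOn hne hvc
  have hv_bound : ∀ y ∈ closure Ω, v y ≤ ϑ / (ν * χ * Real.exp 1) := by
    intro y hy
    have hvy : v y ≤ v z' := hz'max hy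
    rcases hcase z' hz'K with hzΩ | hzF
    · have hlap : Lap v z' ≤ 0 := lap_nonpos hΩo hv2 hzΩ (hlocmax hzΩ hz'max)
      have heq := heq2 z' hzΩ
      have hvu : v z' ≤ u z' := by
        have hτ' : 0 < 1 / τ := by positivity
        nlinarith
      have := hu_bound z' (subset_closure hzΩ)
      linarith
    · have : v z' = 0 := hvb z' hzF
      linarith
  exact ⟨hun x hx, hu_bound x (subset_closure hx), hvn x hx, hv_bound x (subset_closure hx)⟩
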